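/- Let a scheme (explicit in form) be written as u_j^{n+1} = u_j^n - C_{j-1}(u_j^n - u_{j-1}^n) on a periodic grid, where the coefficients satisfy 0 ≤ C_j ≤ 1 for all j. Then TV(u^{n+1}) ≤ TV(u^n). -/
import Mathlib


/-- Harten's lemma (incremental form with only a `C`-coefficient) on a periodic grid:
if `u_j^{n+1} = u_j^n - C_{j-1}(u_j^n - u_{j-1}^n)` with `0 ≤ C_j ≤ 1` for all `j`,
then `TV(u^{n+1}) ≤ TV(u^n)`. -/
theorem harten_explicit_TVD (N : ℕ) [NeZero N] (C : ZMod N → ℝ)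
    (hC : ∀ j, 0 ≤ C j ∧ C j ≤ 1) (u v : ZMod N → ℝ)
    (hscheme : ∀ j : ZMod N, v j = u j - C (j - 1) * (u j - u (j - 1))) :
    ∑ j : ZMod N, |v j - v (j - 1)| ≤ ∑ j : ZMod N, |u j - u (j - 1)| := by
  have key : ∀ j : ZMod N, |v j - v (j - 1)| ≤
      (1 - C (j - 1)) * |u j - u (j - 1)| + C (j - 1 - 1) * |u (j - 1) - u (j - 1 - 1)| := by
    intro j
    have h1 := hscheme j
    have h2 := hscheme (j - 1)
    have hv : v j - v (j - 1) = (1 - C (j - 1)) * (u j - u (j - 1)) +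
        C (j - 1 - 1) * (u (j - 1) - u (j - 1 - 1)) := by
      rw [h1, h2]; ring
    rw [hv]
    calc |(1 - C (j - 1)) * (u j - u (j - 1)) + C (j - 1 - 1) * (u (j - 1) - u (j - 1 - 1))|
        ≤ |(1 - C (j - 1)) * (u j - u (j - 1))| + |C (j - 1 - 1) * (u (j - 1) - u (j - 1 - 1))| :=
          abs_add_le _ _
      _ = (1 - C (j - 1)) * |u j - u (j - 1)| + C (j - 1 - 1) * |u (j - 1) - u (j - 1 - 1)| := by
          rw [abs_mul, abs_mul, abs_of_nonneg (by linarith [(hC (j-1)).2]),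
            abs_of_nonneg (hC (j - 1 - 1)).1]
  calc ∑ j : ZMod N, |v j - v (j - 1)|
      ≤ ∑ j : ZMod N, ((1 - C (j - 1)) * |u j - u (j - 1)|
          + C (j - 1 - 1) * |u (j - 1) - u (j - 1 - 1)|) :=
        Finset.sum_le_sum fun j _ => key j
    _ = ∑ j : ZMod N, (1 - C (j - 1)) * |u j - u (j - 1)|
          + ∑ j : ZMod N, C (j - 1 - 1) * |u (j - 1) - u (j - 1 - 1)| := Finset.sum_add_distrib
    _ = ∑ j : ZMod N, (1 - C (j - 1)) * |u j - u (j - 1)|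
          + ∑ j : ZMod N, C (j - 1) * |u j - u (j - 1)| := by
        congr 1
        exact Fintype.sum_equiv (Equiv.subRight 1) _ _ (fun j => rfl)
    _ = ∑ j : ZMod N, |u j - u (j - 1)| := by
        rw [← Finset.sum_add_distrib]
        exact Finset.sum_congr rfl fun j _ => by ring
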